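/- With notation as above (P a finitely generated submonoid of M = ℤⁿ generating M, σ the dual cone, ρ an extremal ray, e a Demazure root for ρ with (P+e) ∩ P_sat ⊆ P), the kernel of the locally nilpotent derivation δ_e on K[P] is the subalgebra ⊕_{m ∈ P ∩ ρ̂} K·χ^m, where ρ̂ = ρ⊥ ∩ σ∨. -/

import Mathlib

/-- The standard pairing between the lattices `M = ℤⁿ` and `N = ℤⁿ`. -/
def pairZ {n : ℕ} (x y : Fin n → ℤ) : ℤ := ∑ i, x i * y i

lemma pairZ_add {n : ℕ} (x y v : Fin n → ℤ) :
    pairZ (x + y) v = pairZ x v + pairZ y v := by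
  simp [pairZ, add_mul, Finset.sum_add_distrib]

/-- The kernel of the locally nilpotent derivation `δ_e` (given by
`δ_e(χ^m) = ⟨m, n_ρ⟩ χ^{m+e}`) on `K[P]` is the subalgebra `⊕_{m ∈ P ∩ ρ̂} K χ^m`,
i.e. an element lies in the kernel iff every monomial in its support lies on the
face `ρ̂ = ρ⊥ ∩ σ∨`, i.e. pairs to `0` with `n_ρ`. -/
theorem stmt9 {K : Type*} [Field K] [CharZero K] {n k : ℕ}
    (P : AddSubmonoid (Fin n → ℤ)) (hfg : P.FG)
    (hgen : AddSubgroup.closure (P : Set (Fin n → ℤ)) = ⊤)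
    (nρ : Fin k → (Fin n → ℤ))
    (hPsat : ∀ m ∈ P, ∀ j, 0 ≤ pairZ m (nρ j))
    (i₀ : Fin k) (e : Fin n → ℤ)
    (he₁ : pairZ e (nρ i₀) = -1)
    (he₂ : ∀ j, j ≠ i₀ → 0 ≤ pairZ e (nρ j))
    (hPe : ∀ m ∈ P, (∀ j, 0 ≤ pairZ (m + e) (nρ j)) → m + e ∈ P)
    (δ : Derivation K (AddMonoidAlgebra K P) (AddMonoidAlgebra K P))
    (hδ₁ : ∀ (m : P) (h : (m : Fin n → ℤ) + e ∈ P),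
      δ (AddMonoidAlgebra.single m 1) =
        pairZ (m : Fin n → ℤ) (nρ i₀) • (AddMonoidAlgebra.single (⟨(m : Fin n → ℤ) + e, h⟩ : P) 1 :
          AddMonoidAlgebra K P))
    (hδ₂ : ∀ m : P, (m : Fin n → ℤ) + e ∉ P → δ (AddMonoidAlgebra.single m 1) = 0) :
    ∀ x : AddMonoidAlgebra K P,
      δ x = 0 ↔ ∀ m ∈ x.coeff.support, pairZ (m : Fin n → ℤ) (nρ i₀) = 0 := by
  intro x
  have hexp : δ x = ∑ m ∈ x.coeff.support, x.coeff m • δ (AddMonoidAlgebra.single m 1) := by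
    conv_lhs => rw [← AddMonoidAlgebra.sum_coeff_single x]
    rw [Finsupp.sum, map_sum]
    refine Finset.sum_congr rfl fun m hm => ?_
    rw [show (AddMonoidAlgebra.single m (x.coeff m) : AddMonoidAlgebra K P) = x.coeff m • AddMonoidAlgebra.single m 1 by
      rw [AddMonoidAlgebra.smul_single', mul_one]]
    exact δ.map_smul _ _
  constructor
  · intro hx m₀ hm₀
    by_contra hc
    have hge : 0 ≤ pairZ (m₀ : Fin n → ℤ) (nρ i₀) := hPsat _ m₀.2 i₀
    have hpos : 0 < pairZ (m₀ : Fin n → ℤ) (nρ i₀) := lt_of_le_of_ne hge (Ne.symm hc)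
    have hmem : (m₀ : Fin n → ℤ) + e ∈ P := by
      refine hPe _ m₀.2 fun j => ?_
      rw [pairZ_add]
      by_cases hj : j = i₀
      · subst hj; rw [he₁]; omega
      · have := hPsat _ m₀.2 j
        have := he₂ j hj
        omega
    set p : P := ⟨(m₀ : Fin n → ℤ) + e, hmem⟩ with hp
    have hsum : (δ x).coeff p = x.coeff m₀ * ((pairZ (m₀ : Fin n → ℤ) (nρ i₀) : K)) := by
      rw [hexp, AddMonoidAlgebra.coeff_sum, Finsupp.finset_sum_apply]
      rw [Finset.sum_eq_single m₀]
      · rw [hδ₁ m₀ hmem, AddMonoidAlgebra.coeff_smul_apply, AddMonoidAlgebra.coeff_smul_apply,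
            AddMonoidAlgebra.coeff_single, Finsupp.single_eq_same]
        rw [zsmul_eq_mul, mul_one, smul_eq_mul]
      · intro m hm hne
        by_cases h : (m : Fin n → ℤ) + e ∈ P
        · rw [hδ₁ m h, AddMonoidAlgebra.coeff_smul_apply, AddMonoidAlgebra.coeff_smul_apply,
            AddMonoidAlgebra.coeff_single, Finsupp.single_eq_of_ne', smul_zero, smul_zero]
          intro hq
          apply hne
          apply Subtype.ext
          have := congrArg Subtype.val hq
          simpa [hp] using this
        · rw [hδ₂ m h, smul_zero, AddMonoidAlgebra.coeff_zero, Finsupp.zero_apply]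
      · intro h; exact absurd hm₀ h
    rw [hx, AddMonoidAlgebra.coeff_zero, Finsupp.zero_apply] at hsum
    have hx0 : x.coeff m₀ ≠ 0 := Finsupp.mem_support_iff.mp hm₀
    have hcK : ((pairZ (m₀ : Fin n → ℤ) (nρ i₀) : K)) ≠ 0 := by
      exact_mod_cast hc
    exact (mul_ne_zero hx0 hcK) hsum.symm
  · intro h
    rw [hexp]
    refine Finset.sum_eq_zero fun m hm => ?_
    by_cases hmem : (m : Fin n → ℤ) + e ∈ P
    · rw [hδ₁ m hmem, h m hm, zero_smul, smul_zero]
    · rw [hδ₂ m hmem, smul_zero]
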